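/- Let L be a transitive permutation group on a finite set Ω admitting a nontrivial block B with pointwise stabiliser L_{(Ω∖B)} ≠ 1. Then for every constant C there exists a finite connected vertex-transitive pair (Λ, H) with H ≤ Aut(Λ), H transitive on VΛ, local action H_u^{Λ(u)} permutation isomorphic to L at every vertex u, |VΛ| > C, and |H_u| ≥ |L_{(Ω∖B)}|^{|VΛ|/k − 1}, where k = |B|. -/

import Mathlib

set_option linter.unusedSectionVars false
set_option linter.unusedTactic false
set_option linter.unreachableTactic false
set_option maxHeartbeats 1000000

/-- Two sets of permutations (e.g. permutation groups) are permutation isomorphic. -/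
def IsPermIso {α β : Type*} (S : Set (Equiv.Perm α)) (T : Set (Equiv.Perm β)) : Prop :=
  ∃ e : α ≃ β, ∀ p : Equiv.Perm α, p ∈ S ↔ e.permCongr p ∈ T

/-- The set of permutations of the neighbourhood `Λ(u)` induced by elements of the
stabiliser of `u` in `H` (acting as automorphisms of `Λ`): the local action of `H` at `u`. -/
def localSet {V : Type*} (Λ : SimpleGraph V) (H : Subgroup (Equiv.Perm V)) (u : V) :
    Set (Equiv.Perm ↥(Λ.neighborSet u)) :=
  { q | ∃ g ∈ H, (∀ p p' : V, Λ.Adj (g p) (g p') ↔ Λ.Adj p p') ∧ g u = u ∧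
        ∀ x : ↥(Λ.neighborSet u), (q x : V) = g (x : V) }

theorem Equiv.Perm.apply_inv_self {α : Type*} (f : Equiv.Perm α) (x : α) : f (f⁻¹ x) = x := by simp

theorem Equiv.Perm.inv_apply_self {α : Type*} (f : Equiv.Perm α) (x : α) : f⁻¹ (f x) = x := by simp

namespace S16

open Equiv Set SimpleGraph

instance (C : ℕ) : NeZero (2*C+1) := ⟨by omega⟩

structure Setup (Ω : Type*) where
  L : Subgroup (Equiv.Perm Ω)
  B : Set Ω
  b0 : Ω
  hb0 : b0 ∈ B
  htrans : ∀ a b : Ω, ∃ l ∈ L, l a = b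
  hblock : ∀ g ∈ L, (g : Equiv.Perm Ω) '' B = B ∨ Disjoint ((g : Equiv.Perm Ω) '' B) B

variable {Ω : Type*} (S : Setup Ω)

/-! ### Block theory -/

noncomputable def Setup.ell (x : Ω) : S.L :=
  ⟨(S.htrans S.b0 x).choose, (S.htrans S.b0 x).choose_spec.1⟩

lemma Setup.ell_b0 (x : Ω) : (S.ell x : Equiv.Perm Ω) S.b0 = x :=
  (S.htrans S.b0 x).choose_spec.2

noncomputable def Setup.Dblk (x : Ω) : Set Ω := (S.ell x : Equiv.Perm Ω) '' S.B

lemma Setup.mem_Dblk_self (x : Ω) : x ∈ S.Dblk x :=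
  ⟨S.b0, S.hb0, S.ell_b0 x⟩

lemma Setup.Dblk_nonempty (x : Ω) : (S.Dblk x).Nonempty := ⟨x, S.mem_Dblk_self x⟩

lemma Setup.translate_eq {a b : Equiv.Perm Ω} (ha : a ∈ S.L) (hb : b ∈ S.L)
    (h : (a '' S.B ∩ b '' S.B).Nonempty) : a '' S.B = b '' S.B := by
  have hmem : b⁻¹ * a ∈ S.L := S.L.mul_mem (S.L.inv_mem hb) ha
  have himg : ⇑(b⁻¹ * a) '' S.B = ⇑(b⁻¹) '' (⇑a '' S.B) := by
    have hco : ⇑(b⁻¹ * a) = (⇑(b⁻¹) ∘ ⇑a) := rfl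
    rw [hco, Set.image_comp]
  rcases S.hblock _ hmem with he | hd
  · have h2 : ⇑(b⁻¹) '' (⇑a '' S.B) = S.B := by rw [← himg]; exact he
    have h3 : ⇑b '' (⇑(b⁻¹) '' (⇑a '' S.B)) = ⇑b '' S.B := congrArg (fun T => ⇑b '' T) h2
    have hco2 : (⇑b ∘ ⇑(b⁻¹)) = id := by funext z; simp
    rw [← Set.image_comp, hco2, Set.image_id] at h3
    exact h3
  · exfalso
    obtain ⟨z, hz1, hz2⟩ := h
    have hm1 : (b⁻¹ : Equiv.Perm Ω) z ∈ ⇑(b⁻¹ * a) '' S.B := by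
      rw [himg]; exact Set.mem_image_of_mem _ hz1
    have hm2 : (b⁻¹ : Equiv.Perm Ω) z ∈ S.B := by
      obtain ⟨w, hw, rfl⟩ := hz2; simpa using hw
    exact Set.not_disjoint_iff.2 ⟨_, hm1, hm2⟩ hd

lemma Setup.Dblk_eq_of_mem {x y : Ω} (h : y ∈ S.Dblk x) : S.Dblk y = S.Dblk x := by
  apply S.translate_eq (S.ell y).2 (S.ell x).2
  exact ⟨y, S.mem_Dblk_self y, h⟩

lemma Setup.Dblk_eq_or_disjoint (x y : Ω) :
    S.Dblk x = S.Dblk y ∨ Disjoint (S.Dblk x) (S.Dblk y) := by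
  by_cases h : (S.Dblk x ∩ S.Dblk y).Nonempty
  · exact Or.inl (S.translate_eq (S.ell x).2 (S.ell y).2 h)
  · exact Or.inr (Set.disjoint_iff_inter_eq_empty.2 (Set.not_nonempty_iff_eq_empty.1 h))

lemma Setup.image_Dblk (l : S.L) (x : Ω) :
    (l : Equiv.Perm Ω) '' S.Dblk x = S.Dblk ((l : Equiv.Perm Ω) x) := by
  have h1 : (l : Equiv.Perm Ω) '' S.Dblk x
      = ⇑((l : Equiv.Perm Ω) * (S.ell x : Equiv.Perm Ω)) '' S.B := by
    have hco : ⇑((l : Equiv.Perm Ω) * (S.ell x : Equiv.Perm Ω))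
        = (⇑(l : Equiv.Perm Ω) ∘ ⇑(S.ell x : Equiv.Perm Ω)) := rfl
    rw [hco, Set.image_comp]; rfl
  rw [h1]
  apply S.translate_eq (S.L.mul_mem l.2 (S.ell x).2) (S.ell _).2
  refine ⟨(l : Equiv.Perm Ω) x, ?_, S.mem_Dblk_self _⟩
  exact ⟨S.b0, S.hb0, by rw [Equiv.Perm.mul_apply, S.ell_b0]⟩

lemma Setup.mem_Dblk_iff (l : S.L) (x y : Ω) :
    (l : Equiv.Perm Ω) x ∈ S.Dblk y ↔ S.Dblk ((l : Equiv.Perm Ω) x) = S.Dblk y := by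
  constructor
  · exact fun h => S.Dblk_eq_of_mem h
  · intro h; rw [← h]; exact S.mem_Dblk_self _

lemma Setup.Dblk_b0 : S.Dblk S.b0 = S.B := by
  have h0 : S.B = (1 : Equiv.Perm Ω) '' S.B := by simp
  rw [h0]
  apply S.translate_eq (S.ell S.b0).2 (S.L.one_mem)
  exact ⟨S.b0, S.mem_Dblk_self S.b0, by simpa using S.hb0⟩

/-! ### Block representatives -/

open scoped Classical in
noncomputable def Setup.repS (T : Set Ω) : Ω := if h : T.Nonempty then h.some else S.b0

noncomputable def Setup.rep (x : Ω) : Ω := S.repS (S.Dblk x)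

lemma Setup.rep_mem (x : Ω) : S.rep x ∈ S.Dblk x := by
  rw [Setup.rep, Setup.repS, dif_pos (S.Dblk_nonempty x)]
  exact (S.Dblk_nonempty x).some_mem

lemma Setup.rep_congr {x y : Ω} (h : S.Dblk x = S.Dblk y) : S.rep x = S.rep y :=
  congrArg S.repS h

lemma Setup.Dblk_rep (x : Ω) : S.Dblk (S.rep x) = S.Dblk x :=
  S.Dblk_eq_of_mem (S.rep_mem x)

lemma Setup.rep_rep (x : Ω) : S.rep (S.rep x) = S.rep x :=
  S.rep_congr (S.Dblk_rep x)

lemma Setup.rep_eq_iff {x y : Ω} : S.rep x = S.rep y ↔ S.Dblk x = S.Dblk y := by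
  constructor
  · intro h
    rw [← S.Dblk_rep x, h, S.Dblk_rep y]
  · exact S.rep_congr

/-! ### The kernel subgroup -/

def Setup.K0 : Subgroup (Equiv.Perm Ω) :=
  S.L ⊓ fixingSubgroup (Equiv.Perm Ω) S.Bᶜ

lemma Setup.K0_le_L : S.K0 ≤ S.L := inf_le_left

lemma Setup.K0_fix {κ : Equiv.Perm Ω} (hκ : κ ∈ S.K0) {z : Ω} (hz : z ∉ S.B) : κ z = z := by
  have h2 : κ ∈ fixingSubgroup (Equiv.Perm Ω) S.Bᶜ := hκ.2
  rw [mem_fixingSubgroup_iff] at h2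
  exact h2 z hz

lemma Setup.K0_mem_B {κ : Equiv.Perm Ω} (hκ : κ ∈ S.K0) {b : Ω} (hb : b ∈ S.B) : κ b ∈ S.B := by
  by_contra h
  have h2 : κ (κ b) = κ b := S.K0_fix hκ h
  have h3 : κ b = b := κ.injective h2
  rw [h3] at h; exact h hb


/-! ### Indices and the twist vectors -/

section Graph
variable [Fintype Ω]

noncomputable def Setup.eL : S.L ≃ Fin (Nat.card S.L) := Finite.equivFin _

noncomputable def Setup.lc (i : Fin (Nat.card S.L)) : S.L := S.eL.symm i

noncomputable def Setup.eO (_S : Setup Ω) : Ω ≃ Fin (Nat.card Ω) := Finite.equivFin Ω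

abbrev Setup.AA (C : ℕ) : Type := Fin (Nat.card S.L) → ZMod (2*C+1)

abbrev Setup.BV (C : ℕ) : Type := S.AA C × Fin (Nat.card Ω) × Bool

variable (C : ℕ)

noncomputable def Setup.mk3 (s : S.AA C) (x : Ω) (ε : Bool) : S.BV C := (s, S.eO x, ε)

noncomputable def Setup.xc (v : S.BV C) : Ω := S.eO.symm v.2.1

@[simp] lemma Setup.xc_mk3 (s : S.AA C) (x : Ω) (ε : Bool) :
    S.xc C (S.mk3 C s x ε) = x := by simp [Setup.mk3, Setup.xc]

@[simp] lemma Setup.mk3_fst (s : S.AA C) (x : Ω) (ε : Bool) :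
    (S.mk3 C s x ε).1 = s := rfl

@[simp] lemma Setup.mk3_snd (s : S.AA C) (x : Ω) (ε : Bool) :
    (S.mk3 C s x ε).2.2 = ε := rfl

lemma Setup.mk3_xc (v : S.BV C) : S.mk3 C v.1 (S.xc C v) v.2.2 = v := by
  simp [Setup.mk3, Setup.xc]

lemma Setup.mk3_inj {s s' : S.AA C} {x x' : Ω} {ε ε' : Bool}
    (h : S.mk3 C s x ε = S.mk3 C s' x' ε') : s = s' ∧ x = x' ∧ ε = ε' := by
  have h1 := congrArg Prod.fst h
  have h2 := congrArg (fun v => S.xc C v) h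
  have h3 := congrArg (fun v : S.BV C => v.2.2) h
  simp at h1 h2 h3
  exact ⟨h1, h2, h3⟩

open scoped Classical in
noncomputable def Setup.dd (x y : Ω) : S.AA C :=
  fun i => if ((S.lc i : S.L) : Equiv.Perm Ω) x ∈ S.Dblk y then 1 else 0

lemma Setup.dd_congr {x x' y y' : Ω} (hx : S.Dblk x = S.Dblk x') (hy : S.Dblk y = S.Dblk y') :
    S.dd C x y = S.dd C x' y' := by
  funext i
  classical
  set l : S.L := S.lc i
  have key : ((l : Equiv.Perm Ω) x ∈ S.Dblk y) ↔ ((l : Equiv.Perm Ω) x' ∈ S.Dblk y') := by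
    rw [S.mem_Dblk_iff l x y, S.mem_Dblk_iff l x' y']
    rw [← S.image_Dblk l x, ← S.image_Dblk l x', hx, hy]
  simp only [Setup.dd]
  exact if_congr key rfl rfl

noncomputable def Setup.jmap (α β : S.L) : Fin (Nat.card S.L) ≃ Fin (Nat.card S.L) :=
  S.eL.symm.trans (((Equiv.mulRight α).trans (Equiv.mulLeft β⁻¹)).trans S.eL)

@[simp] lemma Setup.lc_jmap (α β : S.L) (i : Fin (Nat.card S.L)) :
    S.lc (S.jmap α β i) = β⁻¹ * (S.lc i * α) := by
  simp [Setup.jmap, Setup.lc]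

noncomputable def Setup.invE : Fin (Nat.card S.L) ≃ Fin (Nat.card S.L) :=
  S.eL.symm.trans ((Equiv.inv S.L).trans S.eL)

@[simp] lemma Setup.lc_invE (i : Fin (Nat.card S.L)) :
    S.lc (S.invE i) = (S.lc i)⁻¹ := by
  simp [Setup.invE, Setup.lc]

lemma Setup.dd_equivar (α β : S.L) (x y : Ω) (i : Fin (Nat.card S.L)) :
    S.dd C ((α : Equiv.Perm Ω) x) ((β : Equiv.Perm Ω) y) i = S.dd C x y (S.jmap α β i) := by
  classical
  simp only [Setup.dd, Setup.lc_jmap]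
  have key : (((S.lc i : S.L) : Equiv.Perm Ω) ((α : Equiv.Perm Ω) x) ∈ S.Dblk ((β : Equiv.Perm Ω) y))
      ↔ (((β⁻¹ * (S.lc i * α) : S.L) : Equiv.Perm Ω) x ∈ S.Dblk y) := by
    rw [← S.image_Dblk β y]
    constructor
    · intro h
      obtain ⟨z, hz, hzz⟩ := h
      have : ((β⁻¹ * (S.lc i * α) : S.L) : Equiv.Perm Ω) x = z := by
        have := congrArg (fun w => ((β : Equiv.Perm Ω))⁻¹ w) hzz
        simpa [Equiv.Perm.mul_apply] using this.symm
      rw [this]; exact hz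
    · intro h
      refine ⟨((β⁻¹ * (S.lc i * α) : S.L) : Equiv.Perm Ω) x, h, ?_⟩
      simp [Equiv.Perm.mul_apply]
  exact if_congr key rfl rfl

lemma Setup.dd_swap (x y : Ω) (i : Fin (Nat.card S.L)) :
    S.dd C y x i = S.dd C x y (S.invE i) := by
  classical
  simp only [Setup.dd, Setup.lc_invE]
  set l : S.L := S.lc i
  have key : ((l : Equiv.Perm Ω) y ∈ S.Dblk x)
      ↔ (((l⁻¹ : S.L) : Equiv.Perm Ω) x ∈ S.Dblk y) := by
    constructor
    · intro h
      have h1 : S.Dblk ((l : Equiv.Perm Ω) y) = S.Dblk x := S.Dblk_eq_of_mem h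
      have h2 : x ∈ (l : Equiv.Perm Ω) '' S.Dblk y := by
        rw [S.image_Dblk l y, h1]; exact S.mem_Dblk_self x
      obtain ⟨z, hz, hzz⟩ := h2
      have h3 : ((l⁻¹ : S.L) : Equiv.Perm Ω) x = z := by
        rw [← hzz]; simp
      rw [h3]; exact hz
    · intro h
      have h1 : S.Dblk (((l⁻¹ : S.L) : Equiv.Perm Ω) x) = S.Dblk y := S.Dblk_eq_of_mem h
      have h2 : y ∈ ((l⁻¹ : S.L) : Equiv.Perm Ω) '' S.Dblk x := by
        rw [S.image_Dblk l⁻¹ x, h1]; exact S.mem_Dblk_self y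
      obtain ⟨z, hz, hzz⟩ := h2
      have h3 : (l : Equiv.Perm Ω) y = z := by
        rw [← hzz]; simp
      rw [h3]; exact hz
  exact if_congr key rfl rfl

/-! ### The big graph -/

def Setup.adjP (v w : S.BV C) : Prop :=
  v.2.2 = false ∧ w.2.2 = true ∧ w.1 = v.1 + S.dd C (S.xc C v) (S.xc C w)

noncomputable def Setup.G : SimpleGraph (S.BV C) where
  Adj v w := S.adjP C v w ∨ S.adjP C w v
  symm := by constructor; intro v w h; tauto
  loopless := by
    constructor
    intro v h
    rcases h with ⟨h1, h2, _⟩ | ⟨h1, h2, _⟩ <;> rw [h1] at h2 <;> exact Bool.noConfusion h2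

lemma Setup.adj_mk3_ff (s : S.AA C) (x : Ω) (w : S.BV C) :
    (S.G C).Adj (S.mk3 C s x false) w ↔ ∃ y, w = S.mk3 C (s + S.dd C x y) y true := by
  constructor
  · rintro (⟨h1, h2, h3⟩ | ⟨h1, h2, h3⟩)
    · refine ⟨S.xc C w, ?_⟩
      simp only [Setup.mk3_fst, Setup.xc_mk3] at h3
      conv_lhs => rw [← S.mk3_xc C w]
      rw [h2, h3]
    · rw [Setup.mk3_snd] at h2; exact absurd h2 (by simp)
  · rintro ⟨y, rfl⟩
    left
    refine ⟨rfl, rfl, ?_⟩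
    simp only [Setup.mk3_fst, Setup.xc_mk3]

lemma Setup.adj_mk3_tt (s : S.AA C) (x : Ω) (w : S.BV C) :
    (S.G C).Adj (S.mk3 C s x true) w ↔ ∃ z, w = S.mk3 C (s - S.dd C z x) z false := by
  constructor
  · rintro (⟨h1, h2, h3⟩ | ⟨h1, h2, h3⟩)
    · rw [Setup.mk3_snd] at h1; exact absurd h1 (by simp)
    · refine ⟨S.xc C w, ?_⟩
      simp only [Setup.mk3_fst, Setup.xc_mk3] at h3
      have h4 : w.1 = s - S.dd C (S.xc C w) x := by rw [h3]; abel
      conv_lhs => rw [← S.mk3_xc C w]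
      rw [h1, h4]
  · rintro ⟨z, rfl⟩
    right
    refine ⟨rfl, rfl, ?_⟩
    simp only [Setup.mk3_fst, Setup.xc_mk3]
    abel

end Graph

/-! ### The colour-respecting predicate -/

section Perms
variable [Fintype Ω] (C : ℕ)

def Setup.PP (g : Equiv.Perm (S.BV C)) : Prop :=
  (∀ a b : S.BV C, (S.G C).Adj (g a) (g b) ↔ (S.G C).Adj a b) ∧
  ∀ v : S.BV C, ∃ l : Equiv.Perm Ω, l ∈ S.L ∧
    ∀ w : S.BV C, (S.G C).Adj v w → S.xc C (g w) = l (S.xc C w)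

lemma Setup.PP_one : S.PP C 1 := ⟨by simp, fun _ => ⟨1, S.L.one_mem, by simp⟩⟩

lemma Setup.PP_mul {g g' : Equiv.Perm (S.BV C)} (hg : S.PP C g) (hg' : S.PP C g') :
    S.PP C (g * g') := by
  constructor
  · intro a b
    rw [Equiv.Perm.mul_apply, Equiv.Perm.mul_apply, hg.1, hg'.1]
  · intro v
    obtain ⟨l1, hl1, h1⟩ := hg'.2 v
    obtain ⟨l2, hl2, h2⟩ := hg.2 (g' v)
    refine ⟨l2 * l1, S.L.mul_mem hl2 hl1, fun w hw => ?_⟩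
    rw [Equiv.Perm.mul_apply, Equiv.Perm.mul_apply,
      h2 (g' w) ((hg'.1 v w).mpr hw), h1 w hw]

lemma Setup.PP_inv {g : Equiv.Perm (S.BV C)} (hg : S.PP C g) : S.PP C g⁻¹ := by
  have hadj : ∀ a b : S.BV C, (S.G C).Adj (g⁻¹ a) (g⁻¹ b) ↔ (S.G C).Adj a b := by
    intro a b
    conv_rhs => rw [← Equiv.Perm.apply_inv_self g a, ← Equiv.Perm.apply_inv_self g b]
    rw [hg.1]
  refine ⟨hadj, fun v => ?_⟩
  obtain ⟨l, hl, h⟩ := hg.2 (g⁻¹ v)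
  refine ⟨l⁻¹, S.L.inv_mem hl, fun w hw => ?_⟩
  have hw' : (S.G C).Adj (g⁻¹ v) (g⁻¹ w) := (hadj v w).mpr hw
  have h5 := h (g⁻¹ w) hw'
  rw [Equiv.Perm.apply_inv_self] at h5
  rw [h5, Equiv.Perm.inv_apply_self]

/-! ### Generators: translations -/

noncomputable def Setup.gT (t : S.AA C) : Equiv.Perm (S.BV C) where
  toFun v := (v.1 + t, v.2)
  invFun v := (v.1 - t, v.2)
  left_inv := by intro v; simp
  right_inv := by intro v; simp

@[simp] lemma Setup.gT_fst (t : S.AA C) (v : S.BV C) : (S.gT C t v).1 = v.1 + t := rfl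
@[simp] lemma Setup.gT_xc (t : S.AA C) (v : S.BV C) : S.xc C (S.gT C t v) = S.xc C v := rfl
@[simp] lemma Setup.gT_bool (t : S.AA C) (v : S.BV C) : (S.gT C t v).2.2 = v.2.2 := rfl

lemma Setup.PP_gT (t : S.AA C) : S.PP C (S.gT C t) := by
  constructor
  · intro a b
    have key : ∀ u w : S.BV C, S.adjP C (S.gT C t u) (S.gT C t w) ↔ S.adjP C u w := by
      intro u w
      simp only [Setup.adjP, Setup.gT_fst, Setup.gT_xc, Setup.gT_bool]
      refine and_congr Iff.rfl (and_congr Iff.rfl ?_)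
      rw [add_right_comm, add_left_inj]
    exact or_congr (key a b) (key b a)
  · exact fun v => ⟨1, S.L.one_mem, fun w _ => by simp⟩

/-! ### Generators: two-sided group elements -/

noncomputable def Setup.gAB (α β : S.L) : Equiv.Perm (S.BV C) where
  toFun v := (v.1 ∘ ⇑(S.jmap α β),
    S.eO ((cond v.2.2 ((β : S.L) : Equiv.Perm Ω) ((α : S.L) : Equiv.Perm Ω)) (S.xc C v)), v.2.2)
  invFun v := (v.1 ∘ ⇑(S.jmap α β).symm,
    S.eO ((cond v.2.2 ((β⁻¹ : S.L) : Equiv.Perm Ω) ((α⁻¹ : S.L) : Equiv.Perm Ω)) (S.xc C v)), v.2.2)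
  left_inv := by
    rintro ⟨s, ix, ε⟩
    cases ε <;>
      simp [Setup.xc, Function.comp_def, Prod.ext_iff] <;> funext i <;> simp
  right_inv := by
    rintro ⟨s, ix, ε⟩
    cases ε <;>
      simp [Setup.xc, Function.comp_def, Prod.ext_iff] <;> funext i <;> simp

@[simp] lemma Setup.gAB_fst (α β : S.L) (v : S.BV C) :
    (S.gAB C α β v).1 = v.1 ∘ ⇑(S.jmap α β) := rfl
@[simp] lemma Setup.gAB_bool (α β : S.L) (v : S.BV C) : (S.gAB C α β v).2.2 = v.2.2 := rfl
@[simp] lemma Setup.gAB_xc (α β : S.L) (v : S.BV C) :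
    S.xc C (S.gAB C α β v)
      = (cond v.2.2 ((β : S.L) : Equiv.Perm Ω) ((α : S.L) : Equiv.Perm Ω)) (S.xc C v) := by
  simp [Setup.gAB, Setup.xc]

lemma comp_equiv_inj {n : ℕ} {m : ℕ} (e : Fin n ≃ Fin n) {f g : Fin n → ZMod m} :
    f ∘ ⇑e = g ∘ ⇑e ↔ f = g := by
  constructor
  · intro h
    funext i
    have := congrFun h (e.symm i)
    simpa using this
  · rintro rfl; rfl

lemma Setup.PP_gAB (α β : S.L) : S.PP C (S.gAB C α β) := by
  constructor
  · intro a b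
    have key : ∀ u w : S.BV C, S.adjP C (S.gAB C α β u) (S.gAB C α β w) ↔ S.adjP C u w := by
      intro u w
      simp only [Setup.adjP, Setup.gAB_fst, Setup.gAB_bool, Setup.gAB_xc]
      constructor
      · rintro ⟨h1, h2, h3⟩
        refine ⟨h1, h2, ?_⟩
        rw [h1, h2] at h3
        simp only [cond_false, cond_true] at h3
        have hdd : S.dd C ((α : Equiv.Perm Ω) (S.xc C u)) ((β : Equiv.Perm Ω) (S.xc C w))
            = S.dd C (S.xc C u) (S.xc C w) ∘ ⇑(S.jmap α β) := by
          funext i; exact S.dd_equivar C α β _ _ i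
        rw [hdd] at h3
        have h4 : w.1 ∘ ⇑(S.jmap α β) = (u.1 + S.dd C (S.xc C u) (S.xc C w)) ∘ ⇑(S.jmap α β) := h3
        exact (comp_equiv_inj (S.jmap α β)).mp h4
      · rintro ⟨h1, h2, h3⟩
        refine ⟨h1, h2, ?_⟩
        rw [h1, h2]
        simp only [cond_false, cond_true]
        have hdd : S.dd C ((α : Equiv.Perm Ω) (S.xc C u)) ((β : Equiv.Perm Ω) (S.xc C w))
            = S.dd C (S.xc C u) (S.xc C w) ∘ ⇑(S.jmap α β) := by
          funext i; exact S.dd_equivar C α β _ _ i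
        rw [hdd, h3]
        rfl
    exact or_congr (key a b) (key b a)
  · intro v
    cases hv : v.2.2
    · refine ⟨(β : S.L), β.2, fun w hw => ?_⟩
      have hwtt : w.2.2 = true := by
        rcases hw with ⟨_, h2, _⟩ | ⟨_, h2, _⟩
        · exact h2
        · rw [hv] at h2; exact absurd h2 (by simp)
      rw [S.gAB_xc, hwtt]; rfl
    · refine ⟨(α : S.L), α.2, fun w hw => ?_⟩
      have hwff : w.2.2 = false := by
        rcases hw with ⟨h1, _, _⟩ | ⟨h1, _, _⟩
        · rw [hv] at h1; exact absurd h1 (by simp)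
        · exact h1
      rw [S.gAB_xc, hwff]; rfl

/-! ### Generators: the side swap -/

lemma Setup.invE_invE (i : Fin (Nat.card S.L)) : S.invE (S.invE i) = i := by
  simp [Setup.invE, Equiv.inv]

noncomputable def Setup.gTheta : Equiv.Perm (S.BV C) :=
  Function.Involutive.toPerm (fun v => (-(v.1 ∘ ⇑S.invE), v.2.1, !v.2.2)) (by
    rintro ⟨s, ix, ε⟩
    have h1 : -((-(s ∘ ⇑S.invE)) ∘ ⇑S.invE) = s := by
      funext i; simp [Function.comp_def, S.invE_invE]
    simp [h1])

@[simp] lemma Setup.gTheta_fst (v : S.BV C) : (S.gTheta C v).1 = -(v.1 ∘ ⇑S.invE) := rfl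
@[simp] lemma Setup.gTheta_xc (v : S.BV C) : S.xc C (S.gTheta C v) = S.xc C v := rfl
@[simp] lemma Setup.gTheta_bool (v : S.BV C) : (S.gTheta C v).2.2 = !v.2.2 := rfl

lemma Setup.dd_comp_invE (x y : Ω) : S.dd C y x ∘ ⇑S.invE = S.dd C x y := by
  funext i
  have h := S.dd_swap C x y (S.invE i)
  rw [Function.comp_apply, h, S.invE_invE]

lemma Setup.PP_gTheta : S.PP C (S.gTheta C) := by
  constructor
  · have key : ∀ u w : S.BV C, S.adjP C (S.gTheta C u) (S.gTheta C w) ↔ S.adjP C w u := by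
      intro u w
      constructor
      · rintro ⟨h1, h2, h3⟩
        simp only [Setup.gTheta_bool] at h1 h2
        have hu : u.2.2 = true := by revert h1; cases u.2.2 <;> simp
        have hw : w.2.2 = false := by revert h2; cases w.2.2 <;> simp
        refine ⟨hw, hu, ?_⟩
        simp only [Setup.gTheta_fst, Setup.gTheta_xc] at h3
        have h4 : u.1 ∘ ⇑S.invE = w.1 ∘ ⇑S.invE + S.dd C (S.xc C u) (S.xc C w) := by
          have h' := congrArg Neg.neg h3
          simp only [neg_neg] at h'
          rw [h']; abel
        have h5 : u.1 ∘ ⇑S.invE = (w.1 + S.dd C (S.xc C w) (S.xc C u)) ∘ ⇑S.invE := by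
          rw [h4]
          have hc : (w.1 + S.dd C (S.xc C w) (S.xc C u)) ∘ ⇑S.invE
              = w.1 ∘ ⇑S.invE + (S.dd C (S.xc C w) (S.xc C u)) ∘ ⇑S.invE := rfl
          rw [hc, S.dd_comp_invE C (S.xc C u) (S.xc C w)]
        have h6 := (comp_equiv_inj S.invE).mp h5
        exact h6
      · rintro ⟨h1, h2, h3⟩
        refine ⟨?_, ?_, ?_⟩
        · rw [Setup.gTheta_bool, h2]; rfl
        · rw [Setup.gTheta_bool, h1]; rfl
        · simp only [Setup.gTheta_fst, Setup.gTheta_xc]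
          rw [h3]
          have hc : (w.1 + S.dd C (S.xc C w) (S.xc C u)) ∘ ⇑S.invE
              = w.1 ∘ ⇑S.invE + (S.dd C (S.xc C w) (S.xc C u)) ∘ ⇑S.invE := rfl
          rw [hc, S.dd_comp_invE C (S.xc C u) (S.xc C w)]
          abel
    intro a b
    exact (or_congr (key a b) (key b a)).trans or_comm
  · exact fun v => ⟨1, S.L.one_mem, fun w _ => by simp⟩

/-! ### Generators: fibre kernel maps -/

noncomputable def Setup.cnj (w : Ω) (κ : S.K0) : Equiv.Perm Ω :=
  (S.ell w : Equiv.Perm Ω) * (κ : Equiv.Perm Ω) * (S.ell w : Equiv.Perm Ω)⁻¹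

lemma Setup.cnj_mem (w : Ω) (κ : S.K0) : S.cnj w κ ∈ S.L :=
  S.L.mul_mem (S.L.mul_mem (S.ell w).2 (S.K0_le_L κ.2)) (S.L.inv_mem (S.ell w).2)

@[simp] lemma Setup.cnj_one (w : Ω) : S.cnj w 1 = 1 := by
  simp [Setup.cnj]

lemma Setup.cnj_mul (w : Ω) (κ κ' : S.K0) :
    S.cnj w (κ * κ') = S.cnj w κ * S.cnj w κ' := by
  unfold Setup.cnj
  simp only [Subgroup.coe_mul]
  group

lemma Setup.cnj_apply_mem (w : Ω) (κ : S.K0) {x : Ω} (hx : x ∈ S.Dblk w) :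
    S.cnj w κ x ∈ S.Dblk w := by
  obtain ⟨b, hb, rfl⟩ := hx
  have h1 : S.cnj w κ ((S.ell w : Equiv.Perm Ω) b)
      = (S.ell w : Equiv.Perm Ω) ((κ : Equiv.Perm Ω) b) := by
    simp [Setup.cnj, Equiv.Perm.mul_apply]
  rw [h1]
  exact ⟨_, S.K0_mem_B κ.2 hb, rfl⟩

lemma Setup.cnj_apply_not_mem (w : Ω) (κ : S.K0) {z : Ω} (hz : z ∉ S.Dblk w) :
    S.cnj w κ z = z := by
  have h1 : (S.ell w : Equiv.Perm Ω)⁻¹ z ∉ S.B := by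
    intro h
    exact hz ⟨_, h, by simp⟩
  have h2 : (κ : Equiv.Perm Ω) ((S.ell w : Equiv.Perm Ω)⁻¹ z) = (S.ell w : Equiv.Perm Ω)⁻¹ z :=
    S.K0_fix κ.2 h1
  rw [Equiv.Perm.inv_def] at h2
  simp [Setup.cnj, Equiv.Perm.mul_apply, h2]

lemma Setup.Dblk_cnj (w : Ω) (κ : S.K0) (x : Ω) : S.Dblk (S.cnj w κ x) = S.Dblk x := by
  by_cases hx : x ∈ S.Dblk w
  · have h1 := S.cnj_apply_mem w κ hx
    rw [S.Dblk_eq_of_mem h1, S.Dblk_eq_of_mem hx]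
  · rw [S.cnj_apply_not_mem w κ hx]

lemma Setup.rep_cnj (w : Ω) (κ : S.K0) (x : Ω) : S.rep (S.cnj w κ x) = S.rep x :=
  S.rep_congr (S.Dblk_cnj w κ x)

noncomputable def Setup.gPsi (f : S.AA C × Bool × Ω → S.K0) : Equiv.Perm (S.BV C) where
  toFun v := S.mk3 C v.1 (S.cnj (S.rep (S.xc C v)) (f (v.1, v.2.2, S.rep (S.xc C v))) (S.xc C v)) v.2.2
  invFun v := S.mk3 C v.1
    (S.cnj (S.rep (S.xc C v)) (f (v.1, v.2.2, S.rep (S.xc C v)))⁻¹ (S.xc C v)) v.2.2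
  left_inv := by
    intro v
    simp only [Setup.xc_mk3, Setup.mk3_fst, Setup.mk3_snd, Setup.rep_cnj]
    have h1 : S.cnj (S.rep (S.xc C v)) (f (v.1, v.2.2, S.rep (S.xc C v)))⁻¹
        (S.cnj (S.rep (S.xc C v)) (f (v.1, v.2.2, S.rep (S.xc C v))) (S.xc C v)) = S.xc C v := by
      rw [← Equiv.Perm.mul_apply, ← S.cnj_mul]
      simp
    rw [h1, S.mk3_xc]
  right_inv := by
    intro v
    simp only [Setup.xc_mk3, Setup.mk3_fst, Setup.mk3_snd, Setup.rep_cnj]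
    have h1 : S.cnj (S.rep (S.xc C v)) (f (v.1, v.2.2, S.rep (S.xc C v)))
        (S.cnj (S.rep (S.xc C v)) (f (v.1, v.2.2, S.rep (S.xc C v)))⁻¹ (S.xc C v)) = S.xc C v := by
      rw [← Equiv.Perm.mul_apply, ← S.cnj_mul]
      simp
    rw [h1, S.mk3_xc]

@[simp] lemma Setup.gPsi_fst (f : S.AA C × Bool × Ω → S.K0) (v : S.BV C) :
    (S.gPsi C f v).1 = v.1 := rfl

@[simp] lemma Setup.gPsi_bool (f : S.AA C × Bool × Ω → S.K0) (v : S.BV C) :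
    (S.gPsi C f v).2.2 = v.2.2 := rfl

lemma Setup.gPsi_xc (f : S.AA C × Bool × Ω → S.K0) (v : S.BV C) :
    S.xc C (S.gPsi C f v)
      = S.cnj (S.rep (S.xc C v)) (f (v.1, v.2.2, S.rep (S.xc C v))) (S.xc C v) := by
  simp [Setup.gPsi]

lemma Setup.Dblk_gPsi_xc (f : S.AA C × Bool × Ω → S.K0) (v : S.BV C) :
    S.Dblk (S.xc C (S.gPsi C f v)) = S.Dblk (S.xc C v) := by
  rw [S.gPsi_xc, S.Dblk_cnj]

lemma Setup.gPsi_apply (f : S.AA C × Bool × Ω → S.K0) (v : S.BV C) :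
    S.gPsi C f v = S.mk3 C v.1
      (S.cnj (S.rep (S.xc C v)) (f (v.1, v.2.2, S.rep (S.xc C v))) (S.xc C v)) v.2.2 := rfl

lemma Setup.gPsi_one : S.gPsi C (1 : S.AA C × Bool × Ω → S.K0) = 1 := by
  ext v : 1
  rw [S.gPsi_apply]
  have h1 : ((1 : S.AA C × Bool × Ω → S.K0) (v.1, v.2.2, S.rep (S.xc C v))) = 1 := rfl
  rw [h1, S.cnj_one]
  simp [S.mk3_xc]

lemma Setup.gPsi_mul (f f' : S.AA C × Bool × Ω → S.K0) :
    S.gPsi C (f * f') = S.gPsi C f * S.gPsi C f' := by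
  ext v : 1
  rw [Equiv.Perm.mul_apply, S.gPsi_apply C f', S.gPsi_apply C f]
  simp only [Setup.xc_mk3, Setup.mk3_fst, Setup.mk3_snd, Setup.rep_cnj]
  rw [S.gPsi_apply]
  have h2 : (f * f') (v.1, v.2.2, S.rep (S.xc C v))
      = f (v.1, v.2.2, S.rep (S.xc C v)) * f' (v.1, v.2.2, S.rep (S.xc C v)) := rfl
  rw [h2, S.cnj_mul, Equiv.Perm.mul_apply]

lemma Setup.gPsi_adj (f : S.AA C × Bool × Ω → S.K0) (a b : S.BV C) :
    (S.G C).Adj (S.gPsi C f a) (S.gPsi C f b) ↔ (S.G C).Adj a b := by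
  have key : ∀ u w : S.BV C, S.adjP C (S.gPsi C f u) (S.gPsi C f w) ↔ S.adjP C u w := by
    intro u w
    simp only [Setup.adjP, Setup.gPsi_fst, Setup.gPsi_bool]
    refine and_congr Iff.rfl (and_congr Iff.rfl ?_)
    rw [S.dd_congr C (S.Dblk_gPsi_xc C f u) (S.Dblk_gPsi_xc C f w)]
  exact or_congr (key a b) (key b a)

open scoped Classical in
noncomputable def Setup.fsingle (p : S.AA C × Bool × Ω) (κ : S.K0) :
    S.AA C × Bool × Ω → S.K0 :=
  fun q => if q = p then κ else 1

lemma Setup.PP_gPsi_single (p : S.AA C × Bool × Ω) (κ : S.K0) :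
    S.PP C (S.gPsi C (S.fsingle C p κ)) := by
  classical
  obtain ⟨s1, ε1, w1⟩ := p
  refine ⟨S.gPsi_adj C _, fun v => ?_⟩
  cases hv : v.2.2
  · -- v on the false side; neighbours live on the true side
    refine ⟨if (ε1 = true ∧ w1 = S.rep w1 ∧ s1 = v.1 + S.dd C (S.xc C v) w1)
        then S.cnj w1 κ else 1, ?_, ?_⟩
    · split
      · exact S.cnj_mem w1 κ
      · exact S.L.one_mem
    · intro w hw
      have hP : S.adjP C v w := by
        rcases hw with h | h
        · exact h
        · exact absurd h.2.1 (by rw [hv]; simp)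
      obtain ⟨h1, h2, h3⟩ := hP
      rw [S.gPsi_xc, h2]
      by_cases hq : ((w.1, true, S.rep (S.xc C w)) : S.AA C × Bool × Ω) = (s1, ε1, w1)
      · have hfs : S.fsingle C (s1, ε1, w1) κ (w.1, true, S.rep (S.xc C w)) = κ := by
          rw [Setup.fsingle, if_pos hq]
        rw [hfs]
        have hq1 : w.1 = s1 := congrArg Prod.fst hq
        have hq2 : ε1 = true := (congrArg (fun z => z.2.1) hq).symm
        have hq3 : S.rep (S.xc C w) = w1 := congrArg (fun z => z.2.2) hq
        have hdd : S.dd C (S.xc C v) (S.xc C w) = S.dd C (S.xc C v) w1 := by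
          refine S.dd_congr C rfl ?_
          rw [← S.Dblk_rep (S.xc C w), hq3]
        have hcond : ε1 = true ∧ w1 = S.rep w1 ∧ s1 = v.1 + S.dd C (S.xc C v) w1 := by
          refine ⟨hq2, ?_, ?_⟩
          · rw [← hq3, S.rep_rep]
          · rw [← hq1, h3, hdd]
        rw [if_pos hcond, hq3]
      · have hfs : S.fsingle C (s1, ε1, w1) κ (w.1, true, S.rep (S.xc C w)) = 1 := by
          rw [Setup.fsingle, if_neg hq]
        rw [hfs, S.cnj_one]
        split
        · rename_i hcond
          obtain ⟨hc1, hc2, hc3⟩ := hcond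
          have hmem : S.xc C w ∉ S.Dblk w1 := by
            intro hmem
            apply hq
            have hD : S.Dblk (S.xc C w) = S.Dblk w1 := S.Dblk_eq_of_mem hmem
            have hrep : S.rep (S.xc C w) = w1 := by
              rw [S.rep_congr hD, ← hc2]
            have hdd : S.dd C (S.xc C v) (S.xc C w) = S.dd C (S.xc C v) w1 :=
              S.dd_congr C rfl hD
            have hw1 : w.1 = s1 := by rw [h3, hdd, ← hc3]
            rw [hw1, hc1, hrep]
          exact (S.cnj_apply_not_mem w1 κ hmem).symm
        · simp
  · -- v on the true side; neighbours live on the false side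
    refine ⟨if (ε1 = false ∧ w1 = S.rep w1 ∧ s1 = v.1 - S.dd C w1 (S.xc C v))
        then S.cnj w1 κ else 1, ?_, ?_⟩
    · split
      · exact S.cnj_mem w1 κ
      · exact S.L.one_mem
    · intro w hw
      have hP : S.adjP C w v := by
        rcases hw with h | h
        · exact absurd h.1 (by rw [hv]; simp)
        · exact h
      obtain ⟨h1, h2, h3⟩ := hP
      have hw1eq : w.1 = v.1 - S.dd C (S.xc C w) (S.xc C v) := by rw [h3]; abel
      rw [S.gPsi_xc, h1]
      by_cases hq : ((w.1, false, S.rep (S.xc C w)) : S.AA C × Bool × Ω) = (s1, ε1, w1)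
      · have hfs : S.fsingle C (s1, ε1, w1) κ (w.1, false, S.rep (S.xc C w)) = κ := by
          rw [Setup.fsingle, if_pos hq]
        rw [hfs]
        have hq1 : w.1 = s1 := congrArg Prod.fst hq
        have hq2 : ε1 = false := (congrArg (fun z => z.2.1) hq).symm
        have hq3 : S.rep (S.xc C w) = w1 := congrArg (fun z => z.2.2) hq
        have hdd : S.dd C (S.xc C w) (S.xc C v) = S.dd C w1 (S.xc C v) := by
          refine S.dd_congr C ?_ rfl
          rw [← S.Dblk_rep (S.xc C w), hq3]
        have hcond : ε1 = false ∧ w1 = S.rep w1 ∧ s1 = v.1 - S.dd C w1 (S.xc C v) := by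
          refine ⟨hq2, ?_, ?_⟩
          · rw [← hq3, S.rep_rep]
          · rw [← hq1, hw1eq, hdd]
        rw [if_pos hcond, hq3]
      · have hfs : S.fsingle C (s1, ε1, w1) κ (w.1, false, S.rep (S.xc C w)) = 1 := by
          rw [Setup.fsingle, if_neg hq]
        rw [hfs, S.cnj_one]
        split
        · rename_i hcond
          obtain ⟨hc1, hc2, hc3⟩ := hcond
          have hmem : S.xc C w ∉ S.Dblk w1 := by
            intro hmem
            apply hq
            have hD : S.Dblk (S.xc C w) = S.Dblk w1 := S.Dblk_eq_of_mem hmem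
            have hrep : S.rep (S.xc C w) = w1 := by
              rw [S.rep_congr hD, ← hc2]
            have hdd : S.dd C (S.xc C w) (S.xc C v) = S.dd C w1 (S.xc C v) :=
              S.dd_congr C hD rfl
            have hw1 : w.1 = s1 := by rw [hw1eq, hdd, ← hc3]
            rw [hw1, hc1, hrep]
          exact (S.cnj_apply_not_mem w1 κ hmem).symm
        · simp

lemma Setup.PP_gPsi (f : S.AA C × Bool × Ω → S.K0) : S.PP C (S.gPsi C f) := by
  classical
  suffices H : ∀ (T : Finset (S.AA C × Bool × Ω)) (f : S.AA C × Bool × Ω → S.K0),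
      (∀ p, f p ≠ 1 → p ∈ T) → S.PP C (S.gPsi C f) by
    exact H Finset.univ f (fun p _ => Finset.mem_univ p)
  intro T
  induction T using Finset.induction with
  | empty =>
    intro f hf
    have h1 : f = 1 := by
      funext p
      by_contra h
      exact absurd (hf p h) (Finset.notMem_empty p)
    rw [h1, S.gPsi_one]
    exact S.PP_one C
  | insert _ _ hp IH =>
    rename_i p T
    intro f hf
    have hdec : f = S.fsingle C p (f p) * Function.update f p 1 := by
      funext q
      by_cases hq : q = p
      · subst hq
        show f q = S.fsingle C q (f q) q * Function.update f q 1 q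
        rw [Setup.fsingle, if_pos rfl, Function.update_self, mul_one]
      · show f q = S.fsingle C p (f p) q * Function.update f p 1 q
        rw [Setup.fsingle, if_neg hq, Function.update_of_ne hq, one_mul]
    rw [hdec, S.gPsi_mul]
    refine S.PP_mul C (S.PP_gPsi_single C p (f p)) (IH _ fun q hq => ?_)
    by_cases hqp : q = p
    · subst hqp
      rw [Function.update_self] at hq
      exact absurd rfl hq
    · rw [Function.update_of_ne hqp] at hq
      rcases Finset.mem_insert.mp (hf q hq) with h | h
      · exact absurd h hqp
      · exact h

end Perms

/-! ### The component, the induced graph and the group -/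

section Comp
variable [Fintype Ω] (C : ℕ)

noncomputable def Setup.v0 : S.BV C := S.mk3 C 0 S.b0 false

lemma Setup.reach_map {g : Equiv.Perm (S.BV C)}
    (hg : ∀ a b : S.BV C, (S.G C).Adj (g a) (g b) ↔ (S.G C).Adj a b)
    {a b : S.BV C} (h : (S.G C).Reachable a b) : (S.G C).Reachable (g a) (g b) :=
  SimpleGraph.Reachable.map (⟨g, fun {u v} huv => (hg u v).mpr huv⟩ : S.G C →g S.G C) h

lemma Setup.reach_twin {s : S.AA C} {x x' : Ω} {ε : Bool} (h : x' ∈ S.Dblk x) :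
    (S.G C).Reachable (S.mk3 C s x ε) (S.mk3 C s x' ε) := by
  have hD : S.Dblk x' = S.Dblk x := S.Dblk_eq_of_mem h
  cases ε
  · have adj1 : (S.G C).Adj (S.mk3 C s x false) (S.mk3 C (s + S.dd C x S.b0) S.b0 true) :=
      (S.adj_mk3_ff C s x _).mpr ⟨S.b0, rfl⟩
    have adj2 : (S.G C).Adj (S.mk3 C s x' false) (S.mk3 C (s + S.dd C x S.b0) S.b0 true) := by
      refine (S.adj_mk3_ff C s x' _).mpr ⟨S.b0, ?_⟩
      rw [S.dd_congr C hD rfl]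
    exact adj1.reachable.trans adj2.reachable.symm
  · have adj1 : (S.G C).Adj (S.mk3 C s x true) (S.mk3 C (s - S.dd C S.b0 x) S.b0 false) :=
      (S.adj_mk3_tt C s x _).mpr ⟨S.b0, rfl⟩
    have adj2 : (S.G C).Adj (S.mk3 C s x' true) (S.mk3 C (s - S.dd C S.b0 x) S.b0 false) := by
      refine (S.adj_mk3_tt C s x' _).mpr ⟨S.b0, ?_⟩
      rw [S.dd_congr C rfl hD]
    exact adj1.reachable.trans adj2.reachable.symm

def Setup.VV : Type _ := {w : S.BV C // (S.G C).Reachable (S.v0 C) w}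

noncomputable def Setup.Lam : SimpleGraph (S.VV C) :=
  SimpleGraph.comap (fun z => z.val) (S.G C)

lemma Setup.Lam_adj (a b : S.VV C) :
    (S.Lam C).Adj a b ↔ (S.G C).Adj a.val b.val := Iff.rfl

noncomputable def Setup.HH : Subgroup (Equiv.Perm (S.VV C)) where
  carrier := {h | ∃ g : Equiv.Perm (S.BV C), S.PP C g ∧
    ∀ x : S.VV C, (h x).val = g x.val}
  one_mem' := ⟨1, S.PP_one C, fun _ => rfl⟩
  mul_mem' := by
    rintro h h' ⟨g, hg, hc⟩ ⟨g', hg', hc'⟩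
    refine ⟨g * g', S.PP_mul C hg hg', fun x => ?_⟩
    rw [Equiv.Perm.mul_apply, Equiv.Perm.mul_apply, ← hc', hc]
  inv_mem' := by
    rintro h ⟨g, hg, hc⟩
    refine ⟨g⁻¹, S.PP_inv C hg, fun x => ?_⟩
    have h1 := hc (h⁻¹ x)
    rw [Equiv.Perm.apply_inv_self] at h1
    rw [h1, Equiv.Perm.inv_apply_self]

lemma Setup.HH_adj {h : Equiv.Perm (S.VV C)} (hh : h ∈ S.HH C) :
    ∀ a b : S.VV C, (S.Lam C).Adj (h a) (h b) ↔ (S.Lam C).Adj a b := by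
  obtain ⟨g, hg, hc⟩ := hh
  intro a b
  rw [S.Lam_adj, S.Lam_adj, hc, hc, hg.1]

lemma Setup.mem_HH_of {g : Equiv.Perm (S.BV C)} (hg : S.PP C g) (x : S.VV C)
    (hgx : (S.G C).Reachable (S.v0 C) (g x.val)) :
    ∃ h : Equiv.Perm (S.VV C), h ∈ S.HH C ∧ ∀ z : S.VV C, (h z).val = g z.val := by
  have hpres : ∀ w : S.BV C,
      (S.G C).Reachable (S.v0 C) w ↔ (S.G C).Reachable (S.v0 C) (g w) := by
    intro w
    constructor
    · intro hw
      have h1 : (S.G C).Reachable x.val w := x.2.symm.trans hw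
      exact hgx.trans (S.reach_map C hg.1 h1)
    · intro hw
      have h1 : (S.G C).Reachable (g x.val) (g w) := hgx.symm.trans hw
      have h2 := S.reach_map C (S.PP_inv C hg).1 h1
      simp only [Equiv.Perm.inv_apply_self] at h2
      exact x.2.trans h2
  exact ⟨g.subtypePerm (fun w => (hpres w).symm), ⟨g, hg, fun _ => rfl⟩, fun _ => rfl⟩

@[simp] lemma Setup.gT_mk3 (t s : S.AA C) (x : Ω) (ε : Bool) :
    S.gT C t (S.mk3 C s x ε) = S.mk3 C (s + t) x ε := rfl

@[simp] lemma Setup.gAB_mk3 (α β : S.L) (s : S.AA C) (x : Ω) (ε : Bool) :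
    S.gAB C α β (S.mk3 C s x ε)
      = S.mk3 C (s ∘ ⇑(S.jmap α β))
          ((cond ε ((β : S.L) : Equiv.Perm Ω) ((α : S.L) : Equiv.Perm Ω)) x) ε := by
  simp [Setup.gAB, Setup.mk3, Setup.xc]

@[simp] lemma Setup.gTheta_mk3 (s : S.AA C) (x : Ω) (ε : Bool) :
    S.gTheta C (S.mk3 C s x ε) = S.mk3 C (-(s ∘ ⇑S.invE)) x (!ε) := rfl

noncomputable def Setup.v0s : S.VV C := ⟨S.v0 C, SimpleGraph.Reachable.refl _⟩

lemma Setup.to_v0 (x : S.VV C) : ∃ h ∈ S.HH C, h x = S.v0s C := by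
  have hx : x.val = S.mk3 C x.val.1 (S.xc C x.val) x.val.2.2 := (S.mk3_xc C x.val).symm
  set s : S.AA C := x.val.1
  set xv : Ω := S.xc C x.val
  have hib : ((S.ell xv)⁻¹ : S.L).val xv = S.b0 := by
    have := S.ell_b0 xv
    have h2 : ((S.ell xv)⁻¹ : S.L).val ((S.ell xv : S.L).val S.b0) = ((S.ell xv)⁻¹ : S.L).val xv := by
      rw [this]
    rw [← h2]
    simp
  cases hε : x.val.2.2
  · -- false side
    set g1 : Equiv.Perm (S.BV C) := S.gAB C ((S.ell xv)⁻¹) 1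
    set g : Equiv.Perm (S.BV C) := S.gT C (-(s ∘ ⇑(S.jmap ((S.ell xv)⁻¹) 1))) * g1
    have hPP : S.PP C g := S.PP_mul C (S.PP_gT C _) (S.PP_gAB C _ _)
    have hgx : g x.val = S.v0 C := by
      show S.gT C _ (g1 x.val) = S.v0 C
      rw [hx, hε]
      show S.gT C _ (S.gAB C ((S.ell xv)⁻¹) 1 (S.mk3 C s xv false)) = S.v0 C
      rw [S.gAB_mk3, S.gT_mk3]
      simp only [cond_false]
      rw [hib]
      have : (s ∘ ⇑(S.jmap ((S.ell xv)⁻¹) 1)) + (-(s ∘ ⇑(S.jmap ((S.ell xv)⁻¹) 1))) = 0 := by abel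
      rw [this]
      rfl
    obtain ⟨h, hmem, happ⟩ := S.mem_HH_of C hPP x (by rw [hgx])
    refine ⟨h, hmem, ?_⟩
    apply Subtype.ext
    rw [happ, hgx]
    rfl
  · -- true side: first swap sides
    set g1 : Equiv.Perm (S.BV C) :=
      S.gAB C ((S.ell xv)⁻¹) 1 * S.gTheta C
    have hg1 : g1 x.val = S.mk3 C ((-(s ∘ ⇑S.invE)) ∘ ⇑(S.jmap ((S.ell xv)⁻¹) 1)) S.b0 false := by
      show S.gAB C ((S.ell xv)⁻¹) 1 (S.gTheta C x.val) = _
      rw [hx, hε, S.gTheta_mk3, S.gAB_mk3]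
      simp only [Bool.not_true, cond_false]
      rw [hib]
    set g : Equiv.Perm (S.BV C) :=
      S.gT C (-((-(s ∘ ⇑S.invE)) ∘ ⇑(S.jmap ((S.ell xv)⁻¹) 1))) * g1
    have hPP : S.PP C g :=
      S.PP_mul C (S.PP_gT C _) (S.PP_mul C (S.PP_gAB C _ _) (S.PP_gTheta C))
    have hgx : g x.val = S.v0 C := by
      show S.gT C _ (g1 x.val) = S.v0 C
      rw [hg1, S.gT_mk3]
      have : ((-(s ∘ ⇑S.invE)) ∘ ⇑(S.jmap ((S.ell xv)⁻¹) 1))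
          + (-((-(s ∘ ⇑S.invE)) ∘ ⇑(S.jmap ((S.ell xv)⁻¹) 1))) = 0 := by abel
      rw [this]
      rfl
    obtain ⟨h, hmem, happ⟩ := S.mem_HH_of C hPP x (by rw [hgx])
    refine ⟨h, hmem, ?_⟩
    apply Subtype.ext
    rw [happ, hgx]
    rfl

lemma Setup.HH_trans (u v : S.VV C) : ∃ h ∈ S.HH C, h u = v := by
  obtain ⟨hu, hum, huv⟩ := S.to_v0 C u
  obtain ⟨hv, hvm, hvv⟩ := S.to_v0 C v
  refine ⟨hv⁻¹ * hu, (S.HH C).mul_mem ((S.HH C).inv_mem hvm) hum, ?_⟩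
  rw [Equiv.Perm.mul_apply, huv, ← hvv, Equiv.Perm.inv_apply_self]

lemma Setup.reach_lift {a w : S.BV C} (p : (S.G C).Walk a w) :
    ∀ (ha : (S.G C).Reachable (S.v0 C) a) (hw : (S.G C).Reachable (S.v0 C) w),
      (S.Lam C).Reachable ⟨a, ha⟩ ⟨w, hw⟩ := by
  induction p with
  | nil =>
    intro ha hw
    exact SimpleGraph.Reachable.refl _
  | @cons a c w h q ih =>
    intro ha hw
    have hadj : (S.Lam C).Adj ⟨a, ha⟩ ⟨c, ha.trans h.reachable⟩ := h
    exact hadj.reachable.trans (ih _ hw)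

lemma Setup.Lam_connected : (S.Lam C).Connected := by
  rw [SimpleGraph.connected_iff]
  refine ⟨?_, ⟨S.v0s C⟩⟩
  have base : ∀ b : S.VV C, (S.Lam C).Reachable (S.v0s C) b := by
    rintro ⟨w, hw⟩
    obtain ⟨p⟩ := hw
    exact S.reach_lift C p _ _
  intro a b
  exact (base a).symm.trans (base b)

/-! ### Neighbourhood identifications -/

noncomputable def Setup.eff (u : S.VV C) (hε : u.val.2.2 = false) :
    ↥((S.Lam C).neighborSet u) ≃ Ω where
  toFun n := S.xc C n.val.val
  invFun y := ⟨⟨S.mk3 C (u.val.1 + S.dd C (S.xc C u.val) y) y true, by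
      refine u.2.trans (SimpleGraph.Adj.reachable ?_)
      conv_lhs => rw [← S.mk3_xc C u.val, hε]
      exact (S.adj_mk3_ff C _ _ _).mpr ⟨y, rfl⟩⟩, by
    show (S.G C).Adj u.val _
    conv_lhs => rw [← S.mk3_xc C u.val, hε]
    exact (S.adj_mk3_ff C _ _ _).mpr ⟨y, rfl⟩⟩
  left_inv := by
    rintro ⟨⟨w, hw⟩, hn⟩
    change (S.G C).Adj u.val w at hn
    have hn' : (S.G C).Adj (S.mk3 C u.val.1 (S.xc C u.val) false) w := by
      rw [← hε, S.mk3_xc C u.val]; exact hn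
    obtain ⟨y, hy⟩ := (S.adj_mk3_ff C _ _ _).mp hn'
    apply Subtype.ext; apply Subtype.ext
    show S.mk3 C (u.val.1 + S.dd C (S.xc C u.val) (S.xc C w)) (S.xc C w) true = w
    rw [hy, S.xc_mk3]
  right_inv := by
    intro y
    show S.xc C (S.mk3 C _ y true) = y
    rw [S.xc_mk3]

noncomputable def Setup.ett (u : S.VV C) (hε : u.val.2.2 = true) :
    ↥((S.Lam C).neighborSet u) ≃ Ω where
  toFun n := S.xc C n.val.val
  invFun y := ⟨⟨S.mk3 C (u.val.1 - S.dd C y (S.xc C u.val)) y false, by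
      refine u.2.trans (SimpleGraph.Adj.reachable ?_)
      conv_lhs => rw [← S.mk3_xc C u.val, hε]
      exact (S.adj_mk3_tt C _ _ _).mpr ⟨y, rfl⟩⟩, by
    show (S.G C).Adj u.val _
    conv_lhs => rw [← S.mk3_xc C u.val, hε]
    exact (S.adj_mk3_tt C _ _ _).mpr ⟨y, rfl⟩⟩
  left_inv := by
    rintro ⟨⟨w, hw⟩, hn⟩
    change (S.G C).Adj u.val w at hn
    have hn' : (S.G C).Adj (S.mk3 C u.val.1 (S.xc C u.val) true) w := by
      rw [← hε, S.mk3_xc C u.val]; exact hn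
    obtain ⟨y, hy⟩ := (S.adj_mk3_tt C _ _ _).mp hn'
    apply Subtype.ext; apply Subtype.ext
    show S.mk3 C (u.val.1 - S.dd C (S.xc C w) (S.xc C u.val)) (S.xc C w) false = w
    rw [hy, S.xc_mk3]
  right_inv := by
    intro y
    show S.xc C (S.mk3 C _ y false) = y
    rw [S.xc_mk3]

/-! ### The local action is `L` -/

lemma Setup.localSet_sub (u : S.VV C) (e : ↥((S.Lam C).neighborSet u) ≃ Ω)
    (he : ∀ n : ↥((S.Lam C).neighborSet u), e n = S.xc C n.val.val)
    {q : Equiv.Perm ↥((S.Lam C).neighborSet u)}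
    (hq : q ∈ localSet (S.Lam C) (S.HH C) u) : e.permCongr q ∈ S.L := by
  obtain ⟨g', hg'H, hadj, hgu, hqg⟩ := hq
  obtain ⟨gb, hPP, hcomp⟩ := hg'H
  obtain ⟨l, hl, hcol⟩ := hPP.2 u.val
  have key : e.permCongr q = l := by
    apply Equiv.ext
    intro y
    rw [Equiv.permCongr_apply]
    set n : ↥((S.Lam C).neighborSet u) := e.symm y with hn
    have hny : e n = y := e.apply_symm_apply y
    have hadjn : (S.G C).Adj u.val n.val.val := by
      have := n.2
      rw [SimpleGraph.mem_neighborSet, S.Lam_adj] at this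
      exact this
    have h1 : (q n).val.val = gb n.val.val := by
      rw [hqg n, hcomp]
    calc e (q n) = S.xc C (q n).val.val := he _
      _ = S.xc C (gb n.val.val) := by rw [h1]
      _ = l (S.xc C n.val.val) := hcol _ hadjn
      _ = l (e n) := by rw [he n]
      _ = l y := by rw [hny]
  rw [key]
  exact hl

lemma Setup.isPermIso (u : S.VV C) :
    IsPermIso (localSet (S.Lam C) (S.HH C) u) {p : Equiv.Perm Ω | p ∈ S.L} := by
  cases hε : u.val.2.2
  case false =>
    refine ⟨S.eff C u hε, fun q => ⟨fun hq => S.localSet_sub C u _ (fun n => rfl) hq, ?_⟩⟩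
    intro hqL
    set p : Equiv.Perm Ω := (S.eff C u hε).permCongr q with hp
    have hpL : p ∈ S.L := hqL
    -- the permutation realising p at u
    set pl : S.L := ⟨p, hpL⟩
    set g0 : Equiv.Perm (S.BV C) := S.gAB C 1 pl
    set g : Equiv.Perm (S.BV C) :=
      S.gT C (u.val.1 - u.val.1 ∘ ⇑(S.jmap 1 pl)) * g0
    have hPP : S.PP C g := S.PP_mul C (S.PP_gT C _) (S.PP_gAB C _ _)
    have hfix : g u.val = u.val := by
      show S.gT C _ (S.gAB C 1 pl u.val) = u.val
      conv_lhs => rw [← S.mk3_xc C u.val, hε]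
      rw [S.gAB_mk3, S.gT_mk3]
      simp only [cond_false, OneMemClass.coe_one, Equiv.Perm.coe_one, id_eq]
      have harith : (u.val.1 ∘ ⇑(S.jmap 1 pl)) + (u.val.1 - u.val.1 ∘ ⇑(S.jmap 1 pl))
          = u.val.1 := by abel
      simp only [Setup.mk3_fst]
      rw [harith]
      conv_rhs => rw [← S.mk3_xc C u.val, hε]
    obtain ⟨h, hmem, happ⟩ := S.mem_HH_of C hPP u (by rw [hfix]; exact u.2)
    have hu : h u = u := by
      apply Subtype.ext; rw [happ, hfix]
    have hpres : ∀ n : S.VV C, n ∈ (S.Lam C).neighborSet u ↔ h n ∈ (S.Lam C).neighborSet u := by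
      intro n
      rw [SimpleGraph.mem_neighborSet, SimpleGraph.mem_neighborSet]
      conv_rhs => rw [← hu]
      exact (S.HH_adj C hmem u n).symm
    set q' : Equiv.Perm ↥((S.Lam C).neighborSet u) := h.subtypePerm (fun n => (hpres n).symm) with hq'
    have hq'mem : q' ∈ localSet (S.Lam C) (S.HH C) u :=
      ⟨h, hmem, S.HH_adj C hmem, hu, fun _ => rfl⟩
    have hcongr : (S.eff C u hε).permCongr q' = p := by
      apply Equiv.ext
      intro y
      rw [Equiv.permCongr_apply]
      set n : ↥((S.Lam C).neighborSet u) := (S.eff C u hε).symm y with hn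
      have hnv : n.val.val = S.mk3 C (u.val.1 + S.dd C (S.xc C u.val) y) y true := rfl
      have h1 : (S.eff C u hε) (q' n) = S.xc C (g n.val.val) := by
        show S.xc C (q' n).val.val = _
        have : (q' n).val.val = g n.val.val := by
          show (h n.val).val = g n.val.val
          exact happ n.val
        rw [this]
      rw [h1, hnv]
      show S.xc C (S.gT C _ (S.gAB C 1 pl (S.mk3 C _ y true))) = p y
      rw [S.gAB_mk3, S.gT_mk3, S.xc_mk3]
      rfl
    have : q' = q := by
      apply (Equiv.injective (S.eff C u hε).permCongr)
      rw [hcongr, ← hp]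
    rw [← this]
    exact hq'mem
  case true =>
    refine ⟨S.ett C u hε, fun q => ⟨fun hq => S.localSet_sub C u _ (fun n => rfl) hq, ?_⟩⟩
    intro hqL
    set p : Equiv.Perm Ω := (S.ett C u hε).permCongr q with hp
    have hpL : p ∈ S.L := hqL
    set pl : S.L := ⟨p, hpL⟩
    set g0 : Equiv.Perm (S.BV C) := S.gAB C pl 1
    set g : Equiv.Perm (S.BV C) :=
      S.gT C (u.val.1 - u.val.1 ∘ ⇑(S.jmap pl 1)) * g0
    have hPP : S.PP C g := S.PP_mul C (S.PP_gT C _) (S.PP_gAB C _ _)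
    have hfix : g u.val = u.val := by
      show S.gT C _ (S.gAB C pl 1 u.val) = u.val
      conv_lhs => rw [← S.mk3_xc C u.val, hε]
      rw [S.gAB_mk3, S.gT_mk3]
      simp only [cond_true, OneMemClass.coe_one, Equiv.Perm.coe_one, id_eq]
      have harith : (u.val.1 ∘ ⇑(S.jmap pl 1)) + (u.val.1 - u.val.1 ∘ ⇑(S.jmap pl 1))
          = u.val.1 := by abel
      simp only [Setup.mk3_fst]
      rw [harith]
      conv_rhs => rw [← S.mk3_xc C u.val, hε]
    obtain ⟨h, hmem, happ⟩ := S.mem_HH_of C hPP u (by rw [hfix]; exact u.2)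
    have hu : h u = u := by
      apply Subtype.ext; rw [happ, hfix]
    have hpres : ∀ n : S.VV C, n ∈ (S.Lam C).neighborSet u ↔ h n ∈ (S.Lam C).neighborSet u := by
      intro n
      rw [SimpleGraph.mem_neighborSet, SimpleGraph.mem_neighborSet]
      conv_rhs => rw [← hu]
      exact (S.HH_adj C hmem u n).symm
    set q' : Equiv.Perm ↥((S.Lam C).neighborSet u) := h.subtypePerm (fun n => (hpres n).symm) with hq'
    have hq'mem : q' ∈ localSet (S.Lam C) (S.HH C) u :=
      ⟨h, hmem, S.HH_adj C hmem, hu, fun _ => rfl⟩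
    have hcongr : (S.ett C u hε).permCongr q' = p := by
      apply Equiv.ext
      intro y
      rw [Equiv.permCongr_apply]
      set n : ↥((S.Lam C).neighborSet u) := (S.ett C u hε).symm y with hn
      have hnv : n.val.val = S.mk3 C (u.val.1 - S.dd C y (S.xc C u.val)) y false := rfl
      have h1 : (S.ett C u hε) (q' n) = S.xc C (g n.val.val) := by
        show S.xc C (q' n).val.val = _
        have : (q' n).val.val = g n.val.val := by
          show (h n.val).val = g n.val.val
          exact happ n.val
        rw [this]
      rw [h1, hnv]
      show S.xc C (S.gT C _ (S.gAB C pl 1 (S.mk3 C _ y false))) = p y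
      rw [S.gAB_mk3, S.gT_mk3, S.xc_mk3]
      rfl
    have : q' = q := by
      apply (Equiv.injective (S.ett C u hε).permCongr)
      rw [hcongr, ← hp]
    rw [← this]
    exact hq'mem

/-! ### Size lower bound -/

lemma Setup.reach_cycle (x1 : Ω) (t : S.AA C) :
    (S.G C).Reachable (S.mk3 C t S.b0 false)
      (S.mk3 C (t + (S.dd C S.b0 S.b0 - S.dd C x1 S.b0 + (S.dd C x1 x1 - S.dd C S.b0 x1)))
        S.b0 false) := by
  have e1 : (S.G C).Adj (S.mk3 C t S.b0 false) (S.mk3 C (t + S.dd C S.b0 S.b0) S.b0 true) :=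
    (S.adj_mk3_ff C _ _ _).mpr ⟨S.b0, rfl⟩
  have e2 : (S.G C).Adj (S.mk3 C (t + S.dd C S.b0 S.b0) S.b0 true)
      (S.mk3 C (t + S.dd C S.b0 S.b0 - S.dd C x1 S.b0) x1 false) :=
    (S.adj_mk3_tt C _ _ _).mpr ⟨x1, rfl⟩
  have e3 : (S.G C).Adj (S.mk3 C (t + S.dd C S.b0 S.b0 - S.dd C x1 S.b0) x1 false)
      (S.mk3 C (t + S.dd C S.b0 S.b0 - S.dd C x1 S.b0 + S.dd C x1 x1) x1 true) :=
    (S.adj_mk3_ff C _ _ _).mpr ⟨x1, rfl⟩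
  have e4 : (S.G C).Adj (S.mk3 C (t + S.dd C S.b0 S.b0 - S.dd C x1 S.b0 + S.dd C x1 x1) x1 true)
      (S.mk3 C (t + S.dd C S.b0 S.b0 - S.dd C x1 S.b0 + S.dd C x1 x1 - S.dd C S.b0 x1)
        S.b0 false) :=
    (S.adj_mk3_tt C _ _ _).mpr ⟨S.b0, rfl⟩
  have heq : t + S.dd C S.b0 S.b0 - S.dd C x1 S.b0 + S.dd C x1 x1 - S.dd C S.b0 x1
      = t + (S.dd C S.b0 S.b0 - S.dd C x1 S.b0 + (S.dd C x1 x1 - S.dd C S.b0 x1)) := by abel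
  rw [← heq]
  exact ((e1.reachable.trans e2.reachable).trans e3.reachable).trans e4.reachable

lemma Setup.reach_smul (x1 : Ω) (n : ℕ) :
    (S.G C).Reachable (S.v0 C)
      (S.mk3 C (n • (S.dd C S.b0 S.b0 - S.dd C x1 S.b0 + (S.dd C x1 x1 - S.dd C S.b0 x1)))
        S.b0 false) := by
  induction n with
  | zero =>
    simp only [zero_smul]
    exact SimpleGraph.Reachable.refl _
  | succ n ih =>
    have h1 := S.reach_cycle C x1
      (n • (S.dd C S.b0 S.b0 - S.dd C x1 S.b0 + (S.dd C x1 x1 - S.dd C S.b0 x1)))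
    have h2 : n • (S.dd C S.b0 S.b0 - S.dd C x1 S.b0 + (S.dd C x1 x1 - S.dd C S.b0 x1))
        + (S.dd C S.b0 S.b0 - S.dd C x1 S.b0 + (S.dd C x1 x1 - S.dd C S.b0 x1))
        = (n+1) • (S.dd C S.b0 S.b0 - S.dd C x1 S.b0 + (S.dd C x1 x1 - S.dd C S.b0 x1)) := by
      rw [succ_nsmul]
    rw [h2] at h1
    exact ih.trans h1

lemma Setup.delta_eval (x1 : Ω) (hx1 : x1 ∉ S.B) :
    (S.dd C S.b0 S.b0 - S.dd C x1 S.b0 + (S.dd C x1 x1 - S.dd C S.b0 x1)) (S.eL 1)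
      = (2 : ZMod (2*C+1)) := by
  classical
  have hlc : (S.lc (S.eL 1) : S.L) = 1 := by simp [Setup.lc]
  have hbb : S.dd C S.b0 S.b0 (S.eL 1) = 1 := by
    simp only [Setup.dd, hlc]
    rw [if_pos]
    simp only [OneMemClass.coe_one, Equiv.Perm.coe_one, id_eq]
    exact S.mem_Dblk_self S.b0
  have hx1b : S.dd C x1 S.b0 (S.eL 1) = 0 := by
    simp only [Setup.dd, hlc]
    rw [if_neg]
    simp only [OneMemClass.coe_one, Equiv.Perm.coe_one, id_eq]
    rw [S.Dblk_b0]
    exact hx1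
  have hxx : S.dd C x1 x1 (S.eL 1) = 1 := by
    simp only [Setup.dd, hlc]
    rw [if_pos]
    simp only [OneMemClass.coe_one, Equiv.Perm.coe_one, id_eq]
    exact S.mem_Dblk_self x1
  have hbx : S.dd C S.b0 x1 (S.eL 1) = 0 := by
    simp only [Setup.dd, hlc]
    rw [if_neg]
    simp only [OneMemClass.coe_one, Equiv.Perm.coe_one, id_eq]
    intro hmem
    have h1 : S.Dblk S.b0 = S.Dblk x1 := S.Dblk_eq_of_mem hmem
    have h2 : x1 ∈ S.Dblk S.b0 := by rw [h1]; exact S.mem_Dblk_self x1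
    rw [S.Dblk_b0] at h2
    exact hx1 h2
  show S.dd C S.b0 S.b0 (S.eL 1) - S.dd C x1 S.b0 (S.eL 1)
      + (S.dd C x1 x1 (S.eL 1) - S.dd C S.b0 x1 (S.eL 1)) = 2
  rw [hbb, hx1b, hxx, hbx]
  ring

instance : Finite (S.VV C) := by
  unfold Setup.VV
  exact Subtype.finite

lemma Setup.card_lower (x1 : Ω) (hx1 : x1 ∉ S.B) : 2*C+1 ≤ Nat.card (S.VV C) := by
  classical
  set Δ : S.AA C := S.dd C S.b0 S.b0 - S.dd C x1 S.b0 + (S.dd C x1 x1 - S.dd C S.b0 x1) with hΔ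
  set F : Fin (2*C+1) → S.VV C :=
    fun n => ⟨S.mk3 C ((n : ℕ) • Δ) S.b0 false, S.reach_smul C x1 n⟩ with hF
  have hinj : Function.Injective F := by
    intro n m hnm
    have h1 : ((n : ℕ) • Δ) = ((m : ℕ) • Δ) := (S.mk3_inj C (congrArg Subtype.val hnm)).1
    have h2 := congrFun h1 (S.eL 1)
    have h3 : ((n : ℕ) • Δ) (S.eL 1) = (n : ℕ) • (Δ (S.eL 1)) := rfl
    have h4 : ((m : ℕ) • Δ) (S.eL 1) = (m : ℕ) • (Δ (S.eL 1)) := rfl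
    have hval : Δ (S.eL 1) = (2 : ZMod (2*C+1)) := by
      rw [hΔ]; exact S.delta_eval C x1 hx1
    rw [h3, h4, hval] at h2
    have h5 : ((n : ℕ) : ZMod (2*C+1)) * 2 = ((m : ℕ) : ZMod (2*C+1)) * 2 := by
      rw [← nsmul_eq_mul] at *
      simpa [nsmul_eq_mul, mul_comm] using h2
    have hmod : ((2*(C+1) : ℕ) : ZMod (2*C+1)) = ((1 : ℕ) : ZMod (2*C+1)) := by
      rw [ZMod.natCast_eq_natCast_iff]
      exact ((Nat.modEq_iff_dvd' (by omega)).mpr ⟨1, by omega⟩).symm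
    have hkey : (2 : ZMod (2*C+1)) * (((C+1) : ℕ) : ZMod (2*C+1)) = 1 := by
      have h0 : ((2*(C+1) : ℕ) : ZMod (2*C+1))
          = (2 : ZMod (2*C+1)) * (((C+1) : ℕ) : ZMod (2*C+1)) := by push_cast; ring
      rw [← h0, hmod, Nat.cast_one]
    have h6 : ((n : ℕ) : ZMod (2*C+1)) = ((m : ℕ) : ZMod (2*C+1)) := by
      have h6' := congrArg (fun z => z * (((C+1) : ℕ) : ZMod (2*C+1))) h5
      rw [mul_assoc, mul_assoc, hkey, mul_one, mul_one] at h6'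
      exact h6'
    have h7 : (n : ℕ) = (m : ℕ) := by
      have hn := ZMod.val_cast_of_lt (a := (n : ℕ)) (n.2)
      have hm := ZMod.val_cast_of_lt (a := (m : ℕ)) (m.2)
      rw [← hn, ← hm, h6]
    exact Fin.ext h7
  calc 2*C+1 = Nat.card (Fin (2*C+1)) := by simp
    _ ≤ Nat.card (S.VV C) := Nat.card_le_card_of_injective F hinj

/-! ### Stabiliser lower bound -/

lemma Setup.ncard_Dblk (x : Ω) : (S.Dblk x).ncard = S.B.ncard :=
  Set.ncard_image_of_injective _ (Equiv.injective _)

noncomputable def Setup.piV (v : S.VV C) : S.AA C × Bool × Ω :=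
  (v.val.1, v.val.2.2, S.rep (S.xc C v.val))

lemma Setup.fiber_mem (vb : S.VV C) {x : Ω} (hx : x ∈ S.Dblk (S.rep (S.xc C vb.val))) :
    (S.G C).Reachable (S.v0 C) (S.mk3 C vb.val.1 x vb.val.2.2) := by
  have h1 : x ∈ S.Dblk (S.xc C vb.val) := by
    rw [← S.Dblk_rep (S.xc C vb.val)]; exact hx
  have h2 := S.reach_twin C (s := vb.val.1) (ε := vb.val.2.2) h1
  rw [S.mk3_xc C vb.val] at h2
  exact vb.2.trans h2

lemma Setup.stab_lower (u : S.VV C) :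
    Nat.card S.K0 ^ (Nat.card (S.VV C) / S.B.ncard - 1)
      ≤ Nat.card ↥(S.HH C ⊓ MulAction.stabilizer (Equiv.Perm (S.VV C)) u) := by
  classical
  letI : Fintype (S.VV C) := Fintype.ofFinite _
  set πV : S.VV C → S.AA C × Bool × Ω := S.piV C with hπ
  set img : Finset (S.AA C × Bool × Ω) := Finset.image πV Finset.univ with himg
  have hfib : ∀ p ∈ img, (Finset.univ.filter (fun v => πV v = p)).card = S.B.ncard := by
    intro p hp
    obtain ⟨vb, _, hvb⟩ := Finset.mem_image.mp hp
    have hbij : (Finset.univ.filter (fun v => πV v = p)).card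
        = (S.Dblk p.2.2).toFinset.card := by
      apply Finset.card_bij (fun v _ => S.xc C v.val)
      · intro v hv
        rw [Finset.mem_filter] at hv
        rw [Set.mem_toFinset]
        have h1 : p.2.2 = S.rep (S.xc C v.val) := (congrArg (fun z => z.2.2) hv.2).symm
        rw [h1, S.Dblk_rep]
        exact S.mem_Dblk_self _
      · intro v hv v' hv' heq
        rw [Finset.mem_filter] at hv hv'
        apply Subtype.ext
        have e1 : v.val = S.mk3 C v.val.1 (S.xc C v.val) v.val.2.2 := (S.mk3_xc C v.val).symm
        have e2 : v'.val = S.mk3 C v'.val.1 (S.xc C v'.val) v'.val.2.2 :=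
          (S.mk3_xc C v'.val).symm
        rw [e1, e2, heq]
        have c1 : v.val.1 = p.1 := congrArg (fun z => z.1) hv.2
        have c1' : v'.val.1 = p.1 := congrArg (fun z => z.1) hv'.2
        have c2 : v.val.2.2 = p.2.1 := congrArg (fun z => z.2.1) hv.2
        have c2' : v'.val.2.2 = p.2.1 := congrArg (fun z => z.2.1) hv'.2
        rw [c1, c1', c2, c2']
      · intro b hb
        rw [Set.mem_toFinset] at hb
        have hb' : b ∈ S.Dblk (S.rep (S.xc C vb.val)) := by
          have : p.2.2 = S.rep (S.xc C vb.val) := (congrArg (fun z => z.2.2) hvb).symm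
          rw [← this]; exact hb
        refine ⟨⟨S.mk3 C vb.val.1 b vb.val.2.2, S.fiber_mem C vb hb'⟩, ?_, ?_⟩
        · refine Finset.mem_filter.mpr ?_
          refine ⟨Finset.mem_univ _, ?_⟩
          show (vb.val.1, vb.val.2.2, S.rep (S.xc C (S.mk3 C vb.val.1 b vb.val.2.2))) = p
          rw [S.xc_mk3]
          have hrb : S.rep b = p.2.2 := by
            have h1 : S.Dblk b = S.Dblk p.2.2 := S.Dblk_eq_of_mem (by
              have : p.2.2 = S.rep (S.xc C vb.val) := (congrArg (fun z => z.2.2) hvb).symm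
              rw [this]; exact hb')
            have h2 : S.rep b = S.rep p.2.2 := S.rep_congr h1
            have h3 : p.2.2 = S.rep (S.xc C vb.val) := (congrArg (fun z => z.2.2) hvb).symm
            rw [h2, h3, S.rep_rep]
          rw [hrb]
          have c1 : vb.val.1 = p.1 := congrArg (fun z => z.1) hvb
          have c2 : vb.val.2.2 = p.2.1 := congrArg (fun z => z.2.1) hvb
          rw [c1, c2]
        · rw [S.xc_mk3]
    rw [hbij, ← Set.ncard_eq_toFinset_card', S.ncard_Dblk]
  have htot : Fintype.card (S.VV C) = img.card * S.B.ncard := by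
    rw [← Finset.card_univ, Finset.card_eq_sum_card_fiberwise
      (fun v _ => Finset.mem_image_of_mem πV (Finset.mem_univ v)),
      Finset.sum_congr rfl hfib, Finset.sum_const, smul_eq_mul]
  have hk : 0 < S.B.ncard := by
    rw [Set.ncard_pos (Set.toFinite S.B)]
    exact ⟨S.b0, S.hb0⟩
  have hdiv : Fintype.card (S.VV C) / S.B.ncard = img.card := by
    rw [htot, Nat.mul_div_cancel _ hk]
  set pu : S.AA C × Bool × Ω := πV u with hpu_def
  have hpu : pu ∈ img := Finset.mem_image_of_mem _ (Finset.mem_univ u)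
  set Ifin : Finset (S.AA C × Bool × Ω) := img.erase pu with hIfin
  have hIcard : Ifin.card = img.card - 1 := Finset.card_erase_of_mem hpu
  set fext : (↥Ifin → S.K0) → (S.AA C × Bool × Ω → S.K0) :=
    fun f q => if hq : q ∈ Ifin then f ⟨q, hq⟩ else 1 with hfext
  have hfix : ∀ f, S.gPsi C (fext f) u.val = u.val := by
    intro f
    rw [S.gPsi_apply]
    have hq : ((u.val.1, u.val.2.2, S.rep (S.xc C u.val)) : S.AA C × Bool × Ω) ∉ Ifin := by
      show pu ∉ Ifin
      exact Finset.notMem_erase _ _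
    rw [show fext f (u.val.1, u.val.2.2, S.rep (S.xc C u.val)) = 1 from dif_neg hq, S.cnj_one]
    show S.mk3 C u.val.1 (S.xc C u.val) u.val.2.2 = u.val
    exact S.mk3_xc C u.val
  have hpres : ∀ f, ∀ w : S.BV C, (S.G C).Reachable (S.v0 C) w
      ↔ (S.G C).Reachable (S.v0 C) (S.gPsi C (fext f) w) := by
    intro f w
    constructor
    · intro hw
      have h1 : (S.G C).Reachable u.val w := u.2.symm.trans hw
      have h2 := S.reach_map C (S.PP_gPsi C (fext f)).1 h1
      rw [hfix f] at h2
      exact u.2.trans h2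
    · intro hw
      have h2 : (S.G C).Reachable (S.gPsi C (fext f) u.val) (S.gPsi C (fext f) w) := by
        rw [hfix f]; exact u.2.symm.trans hw
      have h3 := S.reach_map C (S.PP_inv C (S.PP_gPsi C (fext f))).1 h2
      simp only [Equiv.Perm.inv_apply_self] at h3
      exact u.2.trans h3
  set Θ : (↥Ifin → S.K0) → Equiv.Perm (S.VV C) :=
    fun f => (S.gPsi C (fext f)).subtypePerm (fun w => (hpres f w).symm) with hΘ
  have hmem : ∀ f, Θ f ∈ S.HH C ⊓ MulAction.stabilizer (Equiv.Perm (S.VV C)) u := by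
    intro f
    rw [Subgroup.mem_inf]
    constructor
    · exact ⟨S.gPsi C (fext f), S.PP_gPsi C _, fun _ => rfl⟩
    · rw [MulAction.mem_stabilizer_iff]
      show Θ f u = u
      apply Subtype.ext
      show S.gPsi C (fext f) u.val = u.val
      exact hfix f
  set Θ' : (↥Ifin → S.K0) → ↥(S.HH C ⊓ MulAction.stabilizer (Equiv.Perm (S.VV C)) u) :=
    fun f => ⟨Θ f, hmem f⟩ with hΘ'
  have hinj : Function.Injective Θ' := by
    intro f f' hff
    have hperm : Θ f = Θ f' := congrArg Subtype.val hff
    funext pp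
    obtain ⟨p, hp⟩ := pp
    have hpimg : p ∈ img := Finset.mem_of_mem_erase hp
    obtain ⟨vb, _, hvb⟩ := Finset.mem_image.mp hpimg
    apply Subtype.ext
    apply Equiv.ext
    intro z
    by_cases hz : z ∈ S.B
    · set xz : Ω := (S.ell p.2.2 : Equiv.Perm Ω) z with hxz
      have hxzD : xz ∈ S.Dblk p.2.2 := ⟨z, hz, rfl⟩
      have hp22 : p.2.2 = S.rep (S.xc C vb.val) := (congrArg (fun q => q.2.2) hvb).symm
      have hreach : (S.G C).Reachable (S.v0 C) (S.mk3 C vb.val.1 xz vb.val.2.2) :=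
        S.fiber_mem C vb (by rw [← hp22]; exact hxzD)
      set vz : S.VV C := ⟨S.mk3 C vb.val.1 xz vb.val.2.2, hreach⟩ with hvz
      have h1 : Θ f vz = Θ f' vz := by rw [hperm]
      have h2 : S.gPsi C (fext f) vz.val = S.gPsi C (fext f') vz.val :=
        congrArg Subtype.val h1
      rw [S.gPsi_apply, S.gPsi_apply] at h2
      have hrepz : S.rep xz = p.2.2 := by
        have hD : S.Dblk xz = S.Dblk p.2.2 := S.Dblk_eq_of_mem hxzD
        rw [S.rep_congr hD, hp22, S.rep_rep]
      have hidx : ((vz.val.1, vz.val.2.2, S.rep (S.xc C vz.val)) : S.AA C × Bool × Ω) = p := by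
        show ((vb.val.1, vb.val.2.2, S.rep (S.xc C (S.mk3 C vb.val.1 xz vb.val.2.2)))
          : S.AA C × Bool × Ω) = p
        rw [S.xc_mk3, hrepz]
        have c1 : vb.val.1 = p.1 := congrArg (fun q => q.1) hvb
        have c2 : vb.val.2.2 = p.2.1 := congrArg (fun q => q.2.1) hvb
        rw [c1, c2]
      have hxcz : S.xc C vz.val = xz := S.xc_mk3 C _ _ _
      rw [hxcz] at h2
      rw [hrepz] at h2
      have hidx2 : (((vz.val.1, vz.val.2.2, p.2.2)) : S.AA C × Bool × Ω) = p := by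
        rw [← hrepz, ← hxcz]; exact hidx
      rw [hidx2] at h2
      have hfp : fext f p = f ⟨p, hp⟩ := dif_pos hp
      have hfp' : fext f' p = f' ⟨p, hp⟩ := dif_pos hp
      rw [hfp, hfp'] at h2
      have h3 := (S.mk3_inj C h2).2.1
      have h4 : ∀ κ : S.K0, S.cnj p.2.2 κ xz
          = (S.ell p.2.2 : Equiv.Perm Ω) ((κ : Equiv.Perm Ω) z) := by
        intro κ
        show ((S.ell p.2.2 : Equiv.Perm Ω) * (κ : Equiv.Perm Ω)
          * (S.ell p.2.2 : Equiv.Perm Ω)⁻¹) xz = _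
        rw [hxz]
        simp [Equiv.Perm.mul_apply]
      rw [h4, h4] at h3
      exact (S.ell p.2.2 : Equiv.Perm Ω).injective h3
    · rw [S.K0_fix (f ⟨p, hp⟩).2 hz, S.K0_fix (f' ⟨p, hp⟩).2 hz]
  have hcard1 : Nat.card (↥Ifin → S.K0) = Nat.card S.K0 ^ Ifin.card := by
    rw [Nat.card_fun]
    congr 1
    rw [Nat.card_eq_fintype_card, Fintype.card_coe]
  calc Nat.card S.K0 ^ (Nat.card (S.VV C) / S.B.ncard - 1)
      = Nat.card S.K0 ^ Ifin.card := by
        rw [hIcard]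
        congr 1
        rw [Nat.card_eq_fintype_card, hdiv]
    _ = Nat.card (↥Ifin → S.K0) := hcard1.symm
    _ ≤ Nat.card ↥(S.HH C ⊓ MulAction.stabilizer (Equiv.Perm (S.VV C)) u) :=
        Nat.card_le_card_of_injective Θ' hinj

end Comp

end S16


/-- Let `L` be a transitive permutation group on a finite set `Ω` with a nontrivial block
`B` of size `k` such that the pointwise stabiliser `L_{(Ω∖B)}` is nontrivial.  Then for
every constant `C` there is a finite connected graph `Λ` with a vertex-transitive group
of automorphisms `H ≤ Aut(Λ)` whose local action at every vertex is permutation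
isomorphic to `L`, with `|VΛ| > C` and `|H_u| ≥ |L_{(Ω∖B)}|^{|VΛ|/k − 1}` for every
vertex `u`. -/
theorem stmt16 (Ω : Type*) [Fintype Ω] (L : Subgroup (Equiv.Perm Ω))
    (hLtrans : ∀ a b : Ω, ∃ l ∈ L, l a = b)
    (B : Set Ω)
    (hblock : ∀ g ∈ L, (g : Equiv.Perm Ω) '' B = B ∨ Disjoint ((g : Equiv.Perm Ω) '' B) B)
    (hB1 : 1 < B.ncard) (hB2 : B ≠ Set.univ)
    (hstab : L ⊓ fixingSubgroup (Equiv.Perm Ω) Bᶜ ≠ ⊥) :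
    ∀ C : ℕ, ∃ (V : Type) (_ : Fintype V) (Λ : SimpleGraph V)
        (H : Subgroup (Equiv.Perm V)),
      (∀ g ∈ H, ∀ p q : V, Λ.Adj (g p) (g q) ↔ Λ.Adj p q) ∧
      Λ.Connected ∧
      (∀ u v : V, ∃ h ∈ H, h u = v) ∧
      (∀ u : V, IsPermIso (localSet Λ H u) {p : Equiv.Perm Ω | p ∈ L}) ∧
      C < Fintype.card V ∧
      (∀ u : V,
        Nat.card ↥(L ⊓ fixingSubgroup (Equiv.Perm Ω) Bᶜ) ^ (Fintype.card V / B.ncard - 1) ≤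
          Nat.card ↥(H ⊓ MulAction.stabilizer (Equiv.Perm V) u)) := by
  intro C
  classical
  obtain ⟨b0, hb0⟩ : B.Nonempty := Set.nonempty_of_ncard_ne_zero (by omega)
  obtain ⟨x1, hx1⟩ : ∃ x1, x1 ∉ B := by
    by_contra h
    push_neg at h
    exact hB2 (Set.eq_univ_of_forall h)
  set S : S16.Setup Ω := ⟨L, B, b0, hb0, hLtrans, hblock⟩ with hS
  letI : Fintype (S.VV C) := Fintype.ofFinite _
  refine ⟨S.VV C, inferInstance, S.Lam C, S.HH C, ?_, ?_, ?_, ?_, ?_, ?_⟩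
  · intro g hg p q
    exact S.HH_adj C hg p q
  · exact S.Lam_connected C
  · exact S.HH_trans C
  · intro u
    exact S.isPermIso C u
  · have h1 := S.card_lower C x1 hx1
    rw [Nat.card_eq_fintype_card] at h1
    omega
  · intro u
    have h1 := S.stab_lower C u
    have he : Nat.card (S.VV C) = Fintype.card (S.VV C) := Nat.card_eq_fintype_card
    rw [he] at h1
    exact h1
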